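/- Let y ∈ R^n be a vector with diadic decomposition y = ∑_i 2^{−i} u_i, where u_i ∈ {0,±1}^n have pairwise disjoint supports, and suppose every support satisfies |S(u_i)| ≤ n/d². Let J be the all-ones matrix and let y' be the entrywise absolute value of y. Then y'^T (d/n)J y' ≤ 4‖y‖²/d. -/

import Mathlib

open Matrix
open scoped Classical

lemma geom_aux (m M : ℕ) : ∑ i ∈ Finset.Icc m M, (2:ℝ)^(-(i:ℤ)-1) ≤ 2^(-(m:ℤ)) := by
  rcases le_or_gt m M with h | h
  · have : ∑ i ∈ Finset.Icc m M, (2:ℝ)^(-(i:ℤ)-1)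
        = ∑ t ∈ Finset.range (M + 1 - m), (2:ℝ)^(-(m:ℤ)-1) * (1/2)^t := by
      rw [← Finset.Ico_add_one_right_eq_Icc, Finset.sum_Ico_eq_sum_range]
      refine Finset.sum_congr rfl fun t _ => ?_
      rw [one_div, inv_pow, ← zpow_natCast (2:ℝ) t, ← _root_.zpow_neg,
        ← zpow_add₀ (by norm_num : (2:ℝ) ≠ 0)]
      push_cast
      ring_nf
    rw [this, ← Finset.mul_sum]
    have h2 := sum_geometric_two_le (M + 1 - m)
    have hp : (0:ℝ) < 2^(-(m:ℤ)-1) := by positivity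
    calc (2:ℝ)^(-(m:ℤ)-1) * ∑ t ∈ Finset.range (M+1-m), (1/2:ℝ)^t
        ≤ 2^(-(m:ℤ)-1) * 2 := by nlinarith
      _ = 2^(-(m:ℤ)) := by
          rw [← zpow_add_one₀ (by norm_num : (2:ℝ) ≠ 0)]; ring_nf
  · rw [Finset.Icc_eq_empty (by omega)]
    simp only [Finset.sum_empty]
    positivity

lemma level_sum_bound
    (n d : ℕ) (y : Fin n → ℝ)
    (hdiadic : ∀ j, y j = 0 ∨ ∃ i : ℕ, |y j| = (2:ℝ)^(-(i:ℤ)-1))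
    (hsupp : ∀ i : ℕ,
      ((Finset.univ.filter (fun j => |y j| = (2:ℝ)^(-(i:ℤ)-1))).card : ℝ) ≤
        (n : ℝ) / (d : ℝ)^2) :
    ∀ j, ∑ k ∈ Finset.univ.filter (fun k => |y k| ≤ |y j|), |y k|
        ≤ (n:ℝ)/(d:ℝ)^2 * (2 * |y j|) := by
  classical
  set f : Fin n → ℕ := fun k =>
    if h : ∃ i : ℕ, |y k| = (2:ℝ)^(-(i:ℤ)-1) then h.choose else 0 with hf
  set M := Finset.univ.sup f with hM
  have hlev : ∀ k : Fin n, y k ≠ 0 → |y k| = (2:ℝ)^(-(f k : ℤ)-1) := by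
    intro k hk
    have hex := (hdiadic k).resolve_left hk
    simp only [hf, dif_pos hex]
    exact hex.choose_spec
  intro j
  rcases hdiadic j with h0 | ⟨m, hm⟩
  · have : ∑ k ∈ Finset.univ.filter (fun k => |y k| ≤ |y j|), |y k| = 0 := by
      refine Finset.sum_eq_zero fun k hk => ?_
      have := (Finset.mem_filter.mp hk).2
      rw [h0, abs_zero] at this
      exact le_antisymm this (abs_nonneg _)
    rw [this, h0, abs_zero]
    positivity
  · have habsne : ∀ k : Fin n, |y k| ≠ 0 → y k ≠ 0 := fun k h => fun h2 => h (by simp [h2])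
    rw [← Finset.sum_filter_of_ne (p := fun k => y k ≠ 0)
      (fun k _ h => habsne k h)]
    have hsub : (Finset.univ.filter (fun k => |y k| ≤ |y j|)).filter (fun k => y k ≠ 0)
        ⊆ (Finset.Icc m M).biUnion
          (fun i => Finset.univ.filter (fun k => |y k| = (2:ℝ)^(-(i:ℤ)-1))) := by
      intro k hk
      simp only [Finset.mem_filter, Finset.mem_univ, true_and] at hk
      obtain ⟨hle, hne⟩ := hk
      have hfk := hlev k hne
      have hmem : f k ∈ Finset.Icc m M := by
        refine Finset.mem_Icc.mpr ⟨?_, Finset.le_sup (Finset.mem_univ k)⟩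
        have : (2:ℝ)^(-(f k:ℤ)-1) ≤ (2:ℝ)^(-(m:ℤ)-1) := by rw [← hfk, ← hm]; exact hle
        have := (zpow_le_zpow_iff_right₀ (by norm_num : (1:ℝ) < 2)).mp this
        omega
      exact Finset.mem_biUnion.mpr ⟨f k, hmem, by simp [hfk]⟩
    calc ∑ k ∈ (Finset.univ.filter (fun k => |y k| ≤ |y j|)).filter (fun k => y k ≠ 0), |y k|
        ≤ ∑ k ∈ (Finset.Icc m M).biUnion
            (fun i => Finset.univ.filter (fun k => |y k| = (2:ℝ)^(-(i:ℤ)-1))), |y k| :=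
          Finset.sum_le_sum_of_subset_of_nonneg hsub (fun k _ _ => abs_nonneg _)
      _ = ∑ i ∈ Finset.Icc m M,
            ∑ k ∈ Finset.univ.filter (fun k => |y k| = (2:ℝ)^(-(i:ℤ)-1)), |y k| := by
          refine Finset.sum_biUnion ?_
          intro i _ i' _ hii'
          simp only [Finset.disjoint_left, Finset.mem_filter, Finset.mem_univ, true_and]
          intro k h1 h2
          exact hii' (by
            have h3 : ((-(i:ℤ))-1) = (-(i':ℤ))-1 :=
              zpow_right_injective₀ (by norm_num) (by norm_num) (h1.symm.trans h2)
            omega)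
      _ ≤ ∑ i ∈ Finset.Icc m M, (n:ℝ)/(d:ℝ)^2 * (2:ℝ)^(-(i:ℤ)-1) := by
          refine Finset.sum_le_sum fun i _ => ?_
          have hconst : ∑ k ∈ Finset.univ.filter (fun k => |y k| = (2:ℝ)^(-(i:ℤ)-1)), |y k|
              = ((Finset.univ.filter (fun k => |y k| = (2:ℝ)^(-(i:ℤ)-1))).card : ℝ)
                * (2:ℝ)^(-(i:ℤ)-1) := by
            rw [Finset.sum_congr rfl (fun k hk => (Finset.mem_filter.mp hk).2),
              Finset.sum_const, nsmul_eq_mul]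
          rw [hconst]
          exact mul_le_mul_of_nonneg_right (hsupp i) (by positivity)
      _ = (n:ℝ)/(d:ℝ)^2 * ∑ i ∈ Finset.Icc m M, (2:ℝ)^(-(i:ℤ)-1) := by
          rw [Finset.mul_sum]
      _ ≤ (n:ℝ)/(d:ℝ)^2 * (2:ℝ)^(-(m:ℤ)) :=
          mul_le_mul_of_nonneg_left (geom_aux m M) (by positivity)
      _ = (n:ℝ)/(d:ℝ)^2 * (2 * |y j|) := by
          rw [hm, show (2:ℝ)^(-(m:ℤ)) = 2^(-(m:ℤ)-1) * 2 from by
            rw [← zpow_add_one₀ (by norm_num : (2:ℝ) ≠ 0)]; ring_nf]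
          ring

lemma sum_sq_bound
    (n d : ℕ) (y : Fin n → ℝ)
    (key : ∀ j, ∑ k ∈ Finset.univ.filter (fun k => |y k| ≤ |y j|), |y k|
        ≤ (n:ℝ)/(d:ℝ)^2 * (2 * |y j|)) :
    (∑ j, |y j|) * (∑ j, |y j|) ≤ 4 * ((n:ℝ)/(d:ℝ)^2) * ∑ j, (y j)^2 := by
  have hsplit : (∑ j, |y j|) * (∑ j, |y j|) ≤
      (∑ j, ∑ k ∈ Finset.univ.filter (fun k => |y k| ≤ |y j|), |y j| * |y k|)
      + (∑ j, ∑ k ∈ Finset.univ.filter (fun k => |y j| ≤ |y k|), |y j| * |y k|) := by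
    rw [Finset.sum_mul_sum, ← Finset.sum_add_distrib]
    refine Finset.sum_le_sum fun j _ => ?_
    rw [← Finset.sum_filter_add_sum_filter_not Finset.univ (fun k => |y k| ≤ |y j|)
      (fun k => |y j| * |y k|)]
    refine add_le_add le_rfl ?_
    refine Finset.sum_le_sum_of_subset_of_nonneg ?_
      (fun k _ _ => mul_nonneg (abs_nonneg _) (abs_nonneg _))
    intro k hk
    simp only [Finset.mem_filter, Finset.mem_univ, true_and] at hk ⊢
    exact (not_le.mp hk).le
  have hswap : (∑ j, ∑ k ∈ Finset.univ.filter (fun k => |y j| ≤ |y k|), |y j| * |y k|)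
      = ∑ j, ∑ k ∈ Finset.univ.filter (fun k => |y k| ≤ |y j|), |y j| * |y k| := by
    calc (∑ j, ∑ k ∈ Finset.univ.filter (fun k => |y j| ≤ |y k|), |y j| * |y k|)
        = ∑ j, ∑ k, if |y j| ≤ |y k| then |y j| * |y k| else 0 := by
          simp [Finset.sum_filter]
      _ = ∑ k, ∑ j, if |y j| ≤ |y k| then |y j| * |y k| else 0 := Finset.sum_comm
      _ = ∑ j, ∑ k ∈ Finset.univ.filter (fun k => |y k| ≤ |y j|), |y j| * |y k| := by
          simp [Finset.sum_filter, mul_comm]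
  have hbound : (∑ j, ∑ k ∈ Finset.univ.filter (fun k => |y k| ≤ |y j|), |y j| * |y k|)
      ≤ ∑ j, (n:ℝ)/(d:ℝ)^2 * (2 * ((y j)^2)) := by
    refine Finset.sum_le_sum fun j _ => ?_
    rw [← Finset.mul_sum]
    calc |y j| * ∑ k ∈ Finset.univ.filter (fun k => |y k| ≤ |y j|), |y k|
        ≤ |y j| * ((n:ℝ)/(d:ℝ)^2 * (2 * |y j|)) :=
          mul_le_mul_of_nonneg_left (key j) (abs_nonneg _)
      _ = (n:ℝ)/(d:ℝ)^2 * (2 * ((y j)^2)) := by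
          rw [show |y j| * ((n:ℝ)/(d:ℝ)^2 * (2 * |y j|))
              = (n:ℝ)/(d:ℝ)^2 * (2 * (|y j| * |y j|)) from by ring,
            abs_mul_abs_self, ← sq]
  calc (∑ j, |y j|) * (∑ j, |y j|)
      ≤ _ + _ := hsplit
    _ = 2 * ∑ j, ∑ k ∈ Finset.univ.filter (fun k => |y k| ≤ |y j|), |y j| * |y k| := by
        rw [hswap]; ring
    _ ≤ 2 * ∑ j, (n:ℝ)/(d:ℝ)^2 * (2 * ((y j)^2)) := by linarith
    _ = 4 * ((n:ℝ)/(d:ℝ)^2) * ∑ j, (y j)^2 := by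
        rw [Finset.mul_sum, Finset.mul_sum]; congr 1; funext j; ring

/-- if every nonzero entry of `y` has absolute value a negative power of two
`2^{−i−1}` (diadic decomposition `y = ∑ 2^{−i}u_i`) and every dyadic level has support of
size at most `n/d²`, then with `y'` the entrywise absolute value of `y` and `J` the
all-ones matrix: `y'ᵀ (d/n)J y' ≤ 4‖y‖²/d`. -/
theorem small_support_allones_bound
    (n d : ℕ) (hn : 0 < n) (hd : 0 < d)
    (y : Fin n → ℝ)
    (hdiadic : ∀ j, y j = 0 ∨ ∃ i : ℕ, |y j| = (2:ℝ)^(-(i:ℤ)-1))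
    (hsupp : ∀ i : ℕ,
      ((Finset.univ.filter (fun j => |y j| = (2:ℝ)^(-(i:ℤ)-1))).card : ℝ) ≤
        (n : ℝ) / (d : ℝ)^2) :
    (fun j => |y j|) ⬝ᵥ
        (((d : ℝ) / n) • Matrix.of (fun _ _ => (1 : ℝ))).mulVec (fun j => |y j|) ≤
      4 * (∑ j, (y j)^2) / d := by
  classical
  have key := sum_sq_bound n d y (level_sum_bound n d y hdiadic hsupp)
  have hLHS : (fun j => |y j|) ⬝ᵥ
        (((d : ℝ) / n) • Matrix.of (fun _ _ => (1 : ℝ))).mulVec (fun j => |y j|)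
      = (d:ℝ)/n * ((∑ j, |y j|) * (∑ j, |y j|)) := by
    simp only [dotProduct, Matrix.mulVec, Matrix.smul_apply, Matrix.of_apply,
      smul_eq_mul, mul_one]
    rw [Finset.sum_mul_sum, Finset.mul_sum]
    refine Finset.sum_congr rfl fun j _ => ?_
    rw [Finset.mul_sum, Finset.mul_sum]
    refine Finset.sum_congr rfl fun k _ => ?_
    ring
  rw [hLHS]
  have hn' : (0:ℝ) < n := by exact_mod_cast hn
  have hd' : (0:ℝ) < d := by exact_mod_cast hd
  calc (d:ℝ)/n * ((∑ j, |y j|) * (∑ j, |y j|))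
      ≤ (d:ℝ)/n * (4 * ((n:ℝ)/(d:ℝ)^2) * ∑ j, (y j)^2) :=
        mul_le_mul_of_nonneg_left key (by positivity)
    _ = 4 * (∑ j, (y j)^2) / d := by
        field_simp
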